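/- Let t₁ = 2 and t_n = t_{n−1}² − t_{n−1} + 1 for n ≥ 2, and let T' = conv{0, t₁e₁, …, t_de_d} ⊂ ℝ^d. Then the point e₁ + e₂ + ⋯ + e_d is the unique lattice point of ℤ^d in the interior of T'. -/

import Mathlib

section NT
variable (t : ℕ → ℤ) (h1 : t 1 = 2)
    (hrec : ∀ n : ℕ, 2 ≤ n → t n = t (n - 1) ^ 2 - t (n - 1) + 1)

include h1 hrec in
lemma sylv_two_le : ∀ n : ℕ, 1 ≤ n → 2 ≤ t n := by
  intro n hn
  induction n, hn using Nat.le_induction with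
  | base => omega
  | succ n hn ih =>
    have h := hrec (n + 1) (by omega)
    simp only [Nat.add_sub_cancel] at h
    nlinarith

include h1 hrec in
lemma sylv_succ : ∀ n : ℕ, 1 ≤ n → t n + 1 ≤ t (n + 1) := by
  intro n hn
  have h2 := sylv_two_le t h1 hrec n hn
  have h := hrec (n + 1) (by omega)
  simp only [Nat.add_sub_cancel] at h
  nlinarith

include h1 hrec in
lemma sylv_mono : ∀ m n : ℕ, 1 ≤ m → m ≤ n → t m ≤ t n := by
  intro m n hm hmn
  induction n, hmn using Nat.le_induction with
  | base => exact le_refl _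
  | succ n hn ih =>
    have := sylv_succ t h1 hrec n (by omega)
    omega

include h1 hrec in
lemma sylv_sum : ∀ N : ℕ,
    ∑ j ∈ Finset.range N, ((t (j + 1) : ℝ))⁻¹ = 1 - (((t (N + 1) : ℤ) : ℝ) - 1)⁻¹ := by
  intro N
  induction N with
  | zero => norm_num [h1]
  | succ N ih =>
    have h2 : (2 : ℤ) ≤ t (N + 1) := sylv_two_le t h1 hrec (N + 1) (by omega)
    have h := hrec (N + 2) (by omega)
    rw [show N + 2 - 1 = N + 1 by omega, show N + 2 = N + 1 + 1 by omega] at h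
    rw [Finset.sum_range_succ, ih, h]
    have hb : (2 : ℝ) ≤ ((t (N + 1) : ℤ) : ℝ) := by exact_mod_cast h2
    push_cast
    have h0 : ((t (N + 1) : ℤ) : ℝ) ≠ 0 := by linarith
    have h0' : ((t (N + 1) : ℤ) : ℝ) - 1 ≠ 0 := by intro h'; rw [sub_eq_zero] at h'; linarith
    have h0'' : ((t (N + 1) : ℤ) : ℝ) ^ 2 - ((t (N + 1) : ℤ) : ℝ) ≠ 0 := by
      intro h'
      have : ((t (N + 1) : ℤ) : ℝ) * (((t (N + 1) : ℤ) : ℝ) - 1) = 0 := by ring_nf; ring_nf at h'; linarith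
      rcases mul_eq_zero.1 this with h'' | h'' <;> [exact h0 h''; exact h0' h'']
    field_simp
    ring
end NT

/-- The simplex `T' = conv{0, t₁e₁, …, t_d e_d}` (Zaks–Perles–Wills/Hensley) has
`e₁ + ⋯ + e_d` as its unique interior lattice point. -/
theorem stmt7 (d : ℕ) (hd : 0 < d) (t : ℕ → ℤ) (h1 : t 1 = 2)
    (hrec : ∀ n : ℕ, 2 ≤ n → t n = t (n - 1) ^ 2 - t (n - 1) + 1)
    (v : Fin (d + 1) → Fin d → ℝ)
    (hv : v = fun (i : Fin (d + 1)) (j : Fin d) => if (i : ℕ) = (j : ℕ) + 1 then ((t ((j : ℕ) + 1) : ℤ) : ℝ) else 0)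
    (T : Set (Fin d → ℝ)) (hT : T = convexHull ℝ (Set.range v)) :
    (fun _ : Fin d => (1 : ℝ)) ∈ interior T ∧
      ∀ q : Fin d → ℤ, (fun j => ((q j : ℤ) : ℝ)) ∈ interior T →
        (fun j => ((q j : ℤ) : ℝ)) = fun _ : Fin d => (1 : ℝ) := by
  classical
  set c : Fin d → ℝ := fun j => ((t ((j : ℕ) + 1) : ℤ) : ℝ) with hc
  have hc2 : ∀ j : Fin d, (2 : ℝ) ≤ c j := by
    intro j
    have h := sylv_two_le t h1 hrec ((j : ℕ) + 1) (by omega)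
    show (2:ℝ) ≤ ((t ((j : ℕ) + 1) : ℤ) : ℝ)
    exact_mod_cast h
  have hcpos : ∀ j : Fin d, (0 : ℝ) < c j := fun j => lt_of_lt_of_le two_pos (hc2 j)
  set f : (Fin d → ℝ) → ℝ := fun x => ∑ j, x j * (c j)⁻¹ with hf
  have hlin : IsLinearMap ℝ f := by
    constructor
    · intro x y
      simp only [hf, Pi.add_apply, add_mul, Finset.sum_add_distrib]
    · intro s x
      simp only [hf, Pi.smul_apply, smul_eq_mul, Finset.mul_sum, mul_assoc]
  have hfc : Continuous f :=
    continuous_finset_sum _ fun j _ => (continuous_apply j).mul continuous_const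
  set S : Set (Fin d → ℝ) := {x | (∀ j, 0 ≤ x j) ∧ f x ≤ 1} with hS
  -- value of f on the vertices
  have hfv : ∀ i : Fin (d + 1), f (v i) = if (i : ℕ) = 0 then 0 else 1 := by
    intro i
    induction i using Fin.cases with
    | zero =>
      rw [hf, hv]
      simp
    | succ k =>
      have key : ∀ j : Fin d,
          v (Fin.succ k) j * (c j)⁻¹ = if j = k then 1 else 0 := by
        intro j
        rw [hv]
        dsimp only
        have hsk : ((Fin.succ k : Fin (d+1)) : ℕ) = (k : ℕ) + 1 := rfl
        rw [hsk]
        by_cases hkj : j = k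
        · subst hkj
          simp [mul_inv_cancel₀ (ne_of_gt (hcpos j))]
          exact mul_inv_cancel₀ (ne_of_gt (hcpos j))
        · have hne : ¬((k : ℕ) + 1 = (j : ℕ) + 1) := by
            intro h
            exact hkj (Fin.ext (by omega)).symm
          simp [hne, hkj]
          intro h; exact absurd (Fin.ext h).symm hkj
      rw [hf]
      dsimp only
      rw [Finset.sum_congr rfl (fun j _ => key j), Finset.sum_ite_eq' Finset.univ k fun _ => (1:ℝ)]
      simp [Fin.val_succ]
  -- T = S
  have hTS : T = S := by
    rw [hT]
    apply le_antisymm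
    · apply convexHull_min
      · rintro _ ⟨i, rfl⟩
        constructor
        · intro j
          rw [hv]
          dsimp only
          split
          · exact le_of_lt (hcpos j)
          · exact le_refl 0
        · rw [hfv i]
          split <;> norm_num
      · have hA : Convex ℝ {x : Fin d → ℝ | ∀ j, 0 ≤ x j} := by
          have e : {x : Fin d → ℝ | ∀ j, 0 ≤ x j} =
              Set.pi Set.univ (fun _ : Fin d => Set.Ici (0:ℝ)) := by
            ext x
            simp only [Set.mem_setOf_eq, Set.mem_pi, Set.mem_univ, Set.mem_Ici, true_implies]
          rw [e]
          exact convex_pi fun _ _ => convex_Ici 0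
        exact Convex.inter hA (convex_halfSpace_le hlin 1)
    · intro x hx
      obtain ⟨hx0, hx1⟩ := hx
      set w : Fin (d + 1) → ℝ := Fin.cases (1 - f x) (fun j => x j * (c j)⁻¹) with hw
      have hw0 : ∀ i, 0 ≤ w i := by
        intro i
        induction i using Fin.cases with
        | zero => simpa [hw] using hx1
        | succ k =>
          have : w (Fin.succ k) = x k * (c k)⁻¹ := by simp [hw]
          rw [this]
          exact mul_nonneg (hx0 k) (le_of_lt (inv_pos.2 (hcpos k)))
      have hwsum : ∑ i, w i = 1 := by
        rw [Fin.sum_univ_succ]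
        have h0 : w 0 = 1 - f x := by simp [hw]
        have hsucc : ∀ k : Fin d, w (Fin.succ k) = x k * (c k)⁻¹ := by
          intro k; simp [hw]
        rw [h0]
        rw [Finset.sum_congr rfl (fun k _ => hsucc k)]
        rw [hf]
        ring
      have hxw : x = ∑ i, w i • v i := by
        funext k
        rw [Finset.sum_apply]
        rw [Fin.sum_univ_succ]
        have hv0 : v 0 k = 0 := by
          rw [hv]; simp
        have hvs : ∀ j : Fin d, (w (Fin.succ j) • v (Fin.succ j)) k
            = if j = k then x k else 0 := by
          intro j
          have hws : w (Fin.succ j) = x j * (c j)⁻¹ := by simp [hw]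
          rw [Pi.smul_apply, hws, hv]
          dsimp only
          have hsj : ((Fin.succ j : Fin (d+1)) : ℕ) = (j : ℕ) + 1 := rfl
          rw [hsj]
          by_cases hjk : j = k
          · subst hjk
            simp [smul_eq_mul, mul_assoc, inv_mul_cancel₀ (ne_of_gt (hcpos j))]
            rw [show ((c j)⁻¹ * ((t ((j:ℕ)+1) : ℤ) : ℝ)) = 1 from inv_mul_cancel₀ (ne_of_gt (hcpos j)), mul_one]
          · have hne : ¬((j : ℕ) + 1 = (k : ℕ) + 1) := by
              intro h
              exact hjk (Fin.ext (by omega))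
            simp [hne, hjk]
            intro h; exact absurd (Fin.ext h) hjk
        rw [Finset.sum_congr rfl (fun j _ => hvs j)]
        rw [Finset.sum_ite_eq' Finset.univ k fun _ => x k]
        simp [hv0]
      rw [hxw]
      exact Convex.sum_mem (convex_convexHull ℝ _) (fun i _ => hw0 i) hwsum
        (fun i _ => subset_convexHull ℝ _ ⟨i, rfl⟩)
  -- the open candidate set
  set S' : Set (Fin d → ℝ) := {x | (∀ j, 0 < x j) ∧ f x < 1} with hS'
  have hS'open : IsOpen S' := by
    have e : S' = (⋂ j : Fin d, (fun x : Fin d → ℝ => x j) ⁻¹' Set.Ioi 0) ∩ f ⁻¹' Set.Iio 1 := by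
      ext x
      simp only [hS', Set.mem_setOf_eq, Set.mem_inter_iff, Set.mem_iInter,
        Set.mem_preimage, Set.mem_Ioi, Set.mem_Iio]
    rw [e]
    exact IsOpen.inter
      (isOpen_iInter_of_finite fun j => (continuous_apply j).isOpen_preimage _ isOpen_Ioi)
      (hfc.isOpen_preimage _ isOpen_Iio)
  have hS'sub : S' ⊆ interior T := by
    apply interior_maximal _ hS'open
    intro x hx
    rw [hTS]
    exact ⟨fun j => le_of_lt (hx.1 j), le_of_lt hx.2⟩
  -- interior T ⊆ S'
  have hintub : interior T ⊆ S' := by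
    intro x hx
    constructor
    · intro j
      have hsub : T ⊆ Function.eval j ⁻¹' Set.Ici (0:ℝ) := by
        rw [hTS]
        intro y hy
        exact hy.1 j
      have := interior_mono hsub hx
      rw [← (isOpenMap_eval j).preimage_interior_eq_interior_preimage (continuous_apply j),
        interior_Ici] at this
      exact this
    · set F : (Fin d → ℝ) →L[ℝ] ℝ := LinearMap.toContinuousLinearMap (IsLinearMap.mk' f hlin)
        with hF
      have hFx : ∀ y, F y = f y := fun y => rfl
      have hFsurj : Function.Surjective F := by
        intro y
        refine ⟨Pi.single ⟨0, hd⟩ (y * c ⟨0, hd⟩), ?_⟩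
        rw [hFx, hf]
        dsimp only
        rw [Finset.sum_eq_single (⟨0, hd⟩ : Fin d)]
        · rw [Pi.single_eq_same, mul_assoc, mul_inv_cancel₀ (ne_of_gt (hcpos _)), mul_one]
        · intro b _ hb
          rw [Pi.single_eq_of_ne hb, zero_mul]
        · intro h
          exact absurd (Finset.mem_univ _) h
      have hsub : T ⊆ F ⁻¹' Set.Iic 1 := by
        rw [hTS]
        intro y hy
        simpa [hFx] using hy.2
      have := interior_mono hsub hx
      rw [ContinuousLinearMap.interior_preimage F hFsurj, interior_Iic] at this
      simpa [hFx] using this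
  -- sum of reciprocals
  have hsumval : (∑ j : Fin d, (c j)⁻¹) = 1 - (((t (d + 1) : ℤ) : ℝ) - 1)⁻¹ := by
    have := sylv_sum t h1 hrec d
    rw [← this]
    rw [Fin.sum_univ_eq_sum_range (fun j => ((t (j + 1) : ℤ) : ℝ)⁻¹) d]
  have htd1 : (2:ℝ) ≤ ((t (d + 1) : ℤ) : ℝ) := by
    have := sylv_two_le t h1 hrec (d + 1) (by omega)
    exact_mod_cast this
  constructor
  · apply hS'sub
    constructor
    · intro j; norm_num
    · rw [hf]
      dsimp only
      simp only [one_mul]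
      rw [hsumval]
      have : (0:ℝ) < (((t (d + 1) : ℤ) : ℝ) - 1)⁻¹ := by
        apply inv_pos.2; linarith
      linarith
  · intro q hq
    have hq' := hintub hq
    obtain ⟨hqpos, hqsum⟩ := hq'
    have hq1 : ∀ j, 1 ≤ q j := by
      intro j
      have := hqpos j
      dsimp at this
      exact_mod_cast this
    funext j
    by_contra hne
    have hqj2 : 2 ≤ q j := by
      rcases lt_or_ge (q j) 2 with h | h
      · exfalso; apply hne
        have := hq1 j
        have : q j = 1 := by omega
        rw [this]; norm_num
      · exact h
    -- lower bound on f q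
    have hlb : (∑ k : Fin d, (c k)⁻¹) + (c j)⁻¹ ≤ f fun k => ((q k : ℤ) : ℝ) := by
      rw [hf]
      dsimp only
      have step : ∀ k : Fin d, (c k)⁻¹ + (if k = j then (c k)⁻¹ else 0)
          ≤ ((q k : ℤ) : ℝ) * (c k)⁻¹ := by
        intro k
        have hipos : (0:ℝ) < (c k)⁻¹ := inv_pos.2 (hcpos k)
        by_cases hkj : k = j
        · subst hkj
          have : (2:ℝ) ≤ ((q k : ℤ) : ℝ) := by exact_mod_cast hqj2
          rw [if_pos rfl]
          nlinarith
        · have : (1:ℝ) ≤ ((q k : ℤ) : ℝ) := by exact_mod_cast hq1 k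
          simp only [if_neg hkj]
          nlinarith
      calc (∑ k : Fin d, (c k)⁻¹) + (c j)⁻¹
          = ∑ k : Fin d, ((c k)⁻¹ + if k = j then (c k)⁻¹ else 0) := by
            rw [Finset.sum_add_distrib, Finset.sum_ite_eq' Finset.univ j fun k => (c k)⁻¹]
            simp
        _ ≤ _ := Finset.sum_le_sum fun k _ => step k
    -- but (c j)⁻¹ ≥ (t (d+1) - 1)⁻¹
    have hcj : c j ≤ ((t (d + 1) : ℤ) : ℝ) - 1 := by
      have h1' : t ((j : ℕ) + 1) + 1 ≤ t ((j : ℕ) + 2) :=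
        sylv_succ t h1 hrec ((j : ℕ) + 1) (by omega)
      have h2' : t ((j : ℕ) + 2) ≤ t (d + 1) :=
        sylv_mono t h1 hrec ((j : ℕ) + 2) (d + 1) (by omega) (by omega)
      have : t ((j : ℕ) + 1) ≤ t (d + 1) - 1 := by omega
      have hcast : ((t ((j:ℕ)+1) : ℤ) : ℝ) ≤ ((t (d+1) - 1 : ℤ) : ℝ) := Int.cast_le.mpr this
      push_cast at hcast
      simp only [hc]
      linarith
    have hinv : (((t (d + 1) : ℤ) : ℝ) - 1)⁻¹ ≤ (c j)⁻¹ := by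
      apply inv_anti₀ (hcpos j) hcj
    rw [hsumval] at hlb
    linarith
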